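/- The global function f_S of the sand automaton S is surjective on all configurations, F-surjective (every finite configuration has a finite preimage), and P-surjective (every periodic configuration has a periodic preimage). -/

import Mathlib

/-- The extended integers `ℤ ∪ {-∞, +∞}`. -/
abbrev EZ : Type := WithBot (WithTop ℤ)

/-- Embedding of `ℤ` into the extended integers. -/
def finVal (n : ℤ) : EZ := ((n : WithTop ℤ) : EZ)

/-- The integer value of a finite extended integer (`0` on `±∞`). -/
def valZ (x : EZ) : ℤ := WithBot.recBotCoe 0 (fun y => WithTop.recTopCoe 0 id y) x

/-- The measuring device `β_l^m`. -/
noncomputable def beta (l : ℕ) (m : ℤ) (n : EZ) : EZ :=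
  if finVal (m + (l : ℤ)) < n then ⊤
  else if n < finVal (m - (l : ℤ)) then ⊥
  else WithBot.map (WithTop.map (fun k => k - m)) n

/-- Reference height: the value of `x` if finite, `0` if `x = ±∞`. -/
def refH (x : EZ) : ℤ := if x = ⊥ ∨ x = ⊤ then 0 else valZ x

/-- One-dimensional sandpile configurations. -/
abbrev Config : Type := ℤ → EZ

/-- The neighborhood sequence `d_r^i(c)`: the `2r`-tuple of measured differences. -/
noncomputable def nbhd (r : ℕ) (c : Config) (i : ℤ) : Fin (2 * r) → EZ :=
  fun j => beta r (refH (c i))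
    (c (i + (if (j : ℕ) < r then ((j : ℕ) : ℤ) - (r : ℤ) else ((j : ℕ) : ℤ) - (r : ℤ) + 1)))

/-- The global function of the sand automaton of radius `r` with local rule `lam`. -/
noncomputable def globalF (r : ℕ) (lam : (Fin (2 * r) → EZ) → ℤ) (c : Config) : Config :=
  fun i => if c i = ⊥ ∨ c i = ⊤ then c i
    else finVal (valZ (c i) + lam (nbhd r c i))

/-- Finite configurations. -/
def FiniteConf (c : Config) : Prop := ∃ k : ℕ, ∀ i : ℤ, (k : ℤ) ≤ |i| → c i = finVal 0

/-- Periodic configurations. -/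
def PeriodicConf (c : Config) : Prop := ∃ p : ℤ, p ≠ 0 ∧ ∀ i : ℤ, c (i + p) = c i


/-- The local rule of the sand automaton `S`:
`λ_S(x,y) = +1` if `x = +∞ ∧ y ≠ -∞`, `-1` if `x ≠ +∞ ∧ y = -∞`, `0` otherwise. -/
def lamS (v : Fin 2 → EZ) : ℤ :=
  if v 0 = ⊤ ∧ v 1 ≠ ⊥ then 1
  else if v 0 ≠ ⊤ ∧ v 1 = ⊥ then -1
  else 0

-- basics
lemma finVal_lt_finVal {a b : ℤ} : finVal a < finVal b ↔ a < b := by simp [finVal]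
lemma finVal_lt_top (a : ℤ) : finVal a < (⊤ : EZ) := by
  simp [finVal, ← WithBot.coe_top, WithBot.coe_lt_coe]
lemma bot_lt_finVal (a : ℤ) : (⊥ : EZ) < finVal a := by simp [finVal]
lemma finVal_ne_bot (a : ℤ) : finVal a ≠ ⊥ := by simp [finVal]
lemma finVal_ne_top (a : ℤ) : finVal a ≠ ⊤ := by simp [finVal]
lemma valZ_finVal (a : ℤ) : valZ (finVal a) = a := by simp [valZ, finVal]
lemma refH_finVal (a : ℤ) : refH (finVal a) = a := by
  simp [refH, finVal_ne_bot, finVal_ne_top, valZ_finVal]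
lemma EZ_cases (n : EZ) : n = ⊥ ∨ n = ⊤ ∨ ∃ k, n = finVal k := by
  rcases n with _ | n
  · exact Or.inl rfl
  rcases n with _ | k
  · exact Or.inr (Or.inl rfl)
  · exact Or.inr (Or.inr ⟨k, rfl⟩)

-- beta values
lemma beta_bot' (m : ℤ) : beta 1 m ⊥ = ⊥ := by
  simp [beta, bot_lt_finVal]
lemma beta_top' (m : ℤ) : beta 1 m ⊤ = ⊤ := by
  simp [beta, finVal_lt_top]
lemma beta_finVal (m k : ℤ) :
    beta 1 m (finVal k) = if m + 1 < k then ⊤ else if k < m - 1 then ⊥ else finVal (k - m) := by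
  rw [beta]
  simp only [Nat.cast_one, finVal_lt_finVal]
  split_ifs <;> rfl

lemma beta_eq_top_iff (m : ℤ) (n : EZ) : beta 1 m n = ⊤ ↔ finVal (m + 1) < n := by
  rcases EZ_cases n with h | h | ⟨k, h⟩ <;> subst h
  · simp [beta_bot']
  · simp [beta_top', finVal_lt_top]
  · rw [beta_finVal, finVal_lt_finVal]
    split_ifs with h1 h2
    · simp [h1]
    · simp [h1]
    · simp [h1, finVal_ne_top]

lemma beta_eq_bot_iff (m : ℤ) (n : EZ) : beta 1 m n = ⊥ ↔ n < finVal (m - 1) := by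
  rcases EZ_cases n with h | h | ⟨k, h⟩ <;> subst h
  · simp [beta_bot', bot_lt_finVal]
  · simp [beta_top', not_top_lt]
  · rw [beta_finVal, finVal_lt_finVal]
    split_ifs with h1 h2
    · simp; omega
    · simp [h2]
    · simp [h2, finVal_ne_bot]

noncomputable def lamRule (L : EZ) (m : ℤ) (R : EZ) : ℤ :=
  if finVal (m + 1) < L ∧ ¬(R < finVal (m - 1)) then 1
  else if ¬(finVal (m + 1) < L) ∧ R < finVal (m - 1) then -1
  else 0

lemma lamS_nbhd (c : Config) (i : ℤ) :
    lamS (nbhd 1 c i) = lamRule (c (i - 1)) (refH (c i)) (c (i + 1)) := by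
  have e0 : i + (((0:ℕ):ℤ) - ((1:ℕ):ℤ)) = i - 1 := by push_cast; ring
  have e1 : i + (((1:ℕ):ℤ) - ((1:ℕ):ℤ) + 1) = i + 1 := by push_cast; ring
  have h0 : nbhd 1 c i 0 = beta 1 (refH (c i)) (c (i - 1)) := by
    show beta 1 (refH (c i)) (c (i + (((0:ℕ):ℤ) - ((1:ℕ):ℤ)))) = _
    rw [e0]
  have h1 : nbhd 1 c i 1 = beta 1 (refH (c i)) (c (i + 1)) := by
    show beta 1 (refH (c i)) (c (i + (((1:ℕ):ℤ) - ((1:ℕ):ℤ) + 1))) = _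
    rw [e1]
  rw [lamS, lamRule, h0, h1]
  simp only [ne_eq, beta_eq_top_iff, beta_eq_bot_iff]

lemma lamRule_bounds (L : EZ) (m : ℤ) (R : EZ) :
    -1 ≤ lamRule L m R ∧ lamRule L m R ≤ 1 := by
  rw [lamRule]; split_ifs <;> omega

lemma lamRule_eq_one {L R : EZ} {m : ℤ} (h : lamRule L m R = 1) :
    finVal (m + 1) < L ∧ ¬(R < finVal (m - 1)) := by
  rw [lamRule] at h; split_ifs at h with h1 h2 <;> tauto

lemma lamRule_eq_neg_one {L R : EZ} {m : ℤ} (h : lamRule L m R = -1) :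
    ¬(finVal (m + 1) < L) ∧ R < finVal (m - 1) := by
  rw [lamRule] at h; split_ifs at h with h1 h2 <;> tauto

lemma lamRule_eq_zero {L R : EZ} {m : ℤ} (h : lamRule L m R = 0) :
    (finVal (m + 1) < L ↔ R < finVal (m - 1)) := by
  rw [lamRule] at h; split_ifs at h with h1 h2 <;> tauto
set_option maxHeartbeats 1000000 in
lemma key (L R L' R' : EZ) (m lam : ℤ) (hlam : lam = lamRule L m R)
    (hL : (L = ⊥ ∧ L' = ⊥) ∨ (L = ⊤ ∧ L' = ⊤) ∨
      ∃ l μ : ℤ, L = finVal l ∧ L' = finVal (l - μ) ∧ -1 ≤ μ ∧ μ ≤ 1 ∧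
        (μ = 1 → l ≤ m + 1) ∧ (μ = -1 → m + 2 ≤ l))
    (hR : (R = ⊥ ∧ R' = ⊥) ∨ (R = ⊤ ∧ R' = ⊤) ∨
      ∃ r ν : ℤ, R = finVal r ∧ R' = finVal (r - ν) ∧ -1 ≤ ν ∧ ν ≤ 1 ∧
        (ν = 1 → r + 2 ≤ m) ∧ (ν = -1 → m ≤ r + 1)) :
    lamRule L' (m - lam) R' = lam := by
  have htri : lam = 1 ∨ lam = -1 ∨ lam = 0 := by
    have := lamRule_bounds L m R; omega
  have hcases : (finVal (m+1) < L ∧ ¬(R < finVal (m-1)) ∧ lam = 1) ∨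
      (¬(finVal (m+1) < L) ∧ R < finVal (m-1) ∧ lam = -1) ∨
      (((finVal (m+1) < L) ↔ (R < finVal (m-1))) ∧ lam = 0) := by
    rcases htri with h | h | h
    · obtain ⟨h1, h2⟩ := lamRule_eq_one (hlam.symm.trans h)
      exact Or.inl ⟨h1, h2, h⟩
    · obtain ⟨h1, h2⟩ := lamRule_eq_neg_one (hlam.symm.trans h)
      exact Or.inr (Or.inl ⟨h1, h2, h⟩)
    · exact Or.inr (Or.inr ⟨lamRule_eq_zero (hlam.symm.trans h), h⟩)
  clear hlam htri
  have hX : (finVal (m - lam + 1) < L') ↔ (finVal (m + 1) < L) := by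
    rcases hL with ⟨hl, hl'⟩ | ⟨hl, hl'⟩ | ⟨l, μ, hl, hl', hm1, hm2, hmu1, hmu2⟩ <;>
        subst hl <;> subst hl'
    · simp [not_lt_bot]
    · simp [finVal_lt_top]
    · rw [finVal_lt_finVal, finVal_lt_finVal]
      rcases hcases with ⟨hx, hy, hlv⟩ | ⟨hx, hy, hlv⟩ | ⟨hxy, hlv⟩
      · rw [finVal_lt_finVal] at hx; omega
      · rw [finVal_lt_finVal] at hx; omega
      · rw [finVal_lt_finVal] at hxy
        constructor <;> intro h <;> by_contra hc <;> omega
  have hY : (R' < finVal (m - lam - 1)) ↔ (R < finVal (m - 1)) := by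
    rcases hR with ⟨hr, hr'⟩ | ⟨hr, hr'⟩ | ⟨r, ν, hr, hr', hn1, hn2, hnu1, hnu2⟩ <;>
        subst hr <;> subst hr'
    · simp [bot_lt_finVal]
    · simp [not_top_lt]
    · rw [finVal_lt_finVal, finVal_lt_finVal]
      rcases hcases with ⟨hx, hy, hlv⟩ | ⟨hx, hy, hlv⟩ | ⟨hxy, hlv⟩
      · rw [finVal_lt_finVal] at hy; omega
      · rw [finVal_lt_finVal] at hy; omega
      · rw [finVal_lt_finVal] at hxy
        constructor <;> intro h <;> by_contra hc <;> omega
  rw [lamRule]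
  rcases hcases with ⟨hx, hy, hlv⟩ | ⟨hx, hy, hlv⟩ | ⟨hxy, hlv⟩ <;>
    split_ifs with h1 h2 <;> rw [hlv] <;> first | rfl | (exfalso; tauto)

noncomputable def preS (c : Config) : Config := fun j =>
  if c j = ⊥ ∨ c j = ⊤ then c j
  else finVal (valZ (c j) - lamRule (c (j - 1)) (refH (c j)) (c (j + 1)))

lemma preS_finVal (c : Config) (j l : ℤ) (h : c j = finVal l) :
    preS c j = finVal (l - lamRule (c (j - 1)) l (c (j + 1))) := by
  simp [preS, h, finVal_ne_bot, finVal_ne_top, valZ_finVal, refH_finVal]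

lemma globalF_eq (c : Config) (i : ℤ) :
    globalF 1 lamS c i = if c i = ⊥ ∨ c i = ⊤ then c i
      else finVal (valZ (c i) + lamRule (c (i - 1)) (refH (c i)) (c (i + 1))) := by
  rw [globalF, lamS_nbhd]

lemma main_eq (c : Config) (i : ℤ) : globalF 1 lamS (preS c) i = c i := by
  rcases EZ_cases (c i) with h | h | ⟨m, h⟩
  · have hp : preS c i = c i := by simp [preS, h]
    rw [globalF_eq, hp, h]; simp
  · have hp : preS c i = c i := by simp [preS, h]
    rw [globalF_eq, hp, h]; simp
  · have hp : preS c i = finVal (m - lamRule (c (i - 1)) m (c (i + 1))) :=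
      preS_finVal c i m h
    rw [globalF_eq, hp]
    simp only [finVal_ne_bot, finVal_ne_top, or_self, if_false, valZ_finVal, refH_finVal]
    have hkey : lamRule (preS c (i - 1)) (m - lamRule (c (i - 1)) m (c (i + 1)))
        (preS c (i + 1)) = lamRule (c (i - 1)) m (c (i + 1)) := by
      apply key (c (i - 1)) (c (i + 1)) _ _ m _ rfl
      · rcases EZ_cases (c (i - 1)) with hl | hl | ⟨l, hl⟩
        · exact Or.inl ⟨hl, by simp [preS, hl]⟩
        · exact Or.inr (Or.inl ⟨hl, by simp [preS, hl]⟩)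
        · refine Or.inr (Or.inr ⟨l, lamRule (c (i - 1 - 1)) l (c (i - 1 + 1)), hl,
            preS_finVal c (i - 1) l hl, (lamRule_bounds _ _ _).1, (lamRule_bounds _ _ _).2,
            ?_, ?_⟩)
          · intro h1
            have h2 := (lamRule_eq_one h1).2
            rw [show i - 1 + 1 = i by ring, h, finVal_lt_finVal] at h2
            omega
          · intro h1
            have h2 := (lamRule_eq_neg_one h1).2
            rw [show i - 1 + 1 = i by ring, h, finVal_lt_finVal] at h2
            omega
      · rcases EZ_cases (c (i + 1)) with hr | hr | ⟨r, hr⟩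
        · exact Or.inl ⟨hr, by simp [preS, hr]⟩
        · exact Or.inr (Or.inl ⟨hr, by simp [preS, hr]⟩)
        · refine Or.inr (Or.inr ⟨r, lamRule (c (i + 1 - 1)) r (c (i + 1 + 1)), hr,
            preS_finVal c (i + 1) r hr, (lamRule_bounds _ _ _).1, (lamRule_bounds _ _ _).2,
            ?_, ?_⟩)
          · intro h1
            have h2 := (lamRule_eq_one h1).1
            rw [show i + 1 - 1 = i by ring, h, finVal_lt_finVal] at h2
            omega
          · intro h1
            have h2 := (lamRule_eq_neg_one h1).1
            rw [show i + 1 - 1 = i by ring, h, finVal_lt_finVal] at h2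
            omega
    rw [hkey, h]
    congr 1
    ring

lemma lamRule_zero : lamRule (finVal 0) 0 (finVal 0) = 0 := by
  rw [lamRule]
  norm_num [finVal_lt_finVal]

lemma preS_finite (c : Config) (h : FiniteConf c) : FiniteConf (preS c) := by
  obtain ⟨k, hk⟩ := h
  refine ⟨k + 1, fun i hi => ?_⟩
  have e1 : c (i - 1) = finVal 0 := by
    apply hk; simp only [Int.abs_eq_natAbs] at hi ⊢; omega
  have e2 : c i = finVal 0 := by
    apply hk; simp only [Int.abs_eq_natAbs] at hi ⊢; omega
  have e3 : c (i + 1) = finVal 0 := by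
    apply hk; simp only [Int.abs_eq_natAbs] at hi ⊢; omega
  rw [preS_finVal c i 0 e2, e1, e3, lamRule_zero]
  norm_num

lemma preS_periodic (c : Config) (h : PeriodicConf c) : PeriodicConf (preS c) := by
  obtain ⟨p, hp, hper⟩ := h
  refine ⟨p, hp, fun i => ?_⟩
  have h1 : c (i + p) = c i := hper i
  have h2 : c (i + p - 1) = c (i - 1) := by
    have := hper (i - 1); rw [show i - 1 + p = i + p - 1 by ring] at this; exact this
  have h3 : c (i + p + 1) = c (i + 1) := by
    have := hper (i + 1); rw [show i + 1 + p = i + p + 1 by ring] at this; exact this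
  simp only [preS, h1, h2, h3]

/-- `f_S` is surjective, `F`-surjective (every finite configuration has a finite
preimage) and `P`-surjective (every periodic configuration has a periodic preimage). -/
theorem S_surjective :
    Function.Surjective (globalF 1 lamS) ∧
    (∀ c : Config, FiniteConf c → ∃ c', FiniteConf c' ∧ globalF 1 lamS c' = c) ∧
    (∀ c : Config, PeriodicConf c → ∃ c', PeriodicConf c' ∧ globalF 1 lamS c' = c) := by
  refine ⟨fun c => ⟨preS c, funext (main_eq c)⟩,
    fun c hc => ⟨preS c, preS_finite c hc, funext (main_eq c)⟩,
    fun c hc => ⟨preS c, preS_periodic c hc, funext (main_eq c)⟩⟩
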